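/- Let X be a subset of ℝ^N and let E be a vector sublattice of the real-valued functions on X containing the restrictions to X of the test functions 1, pr_1, …, pr_N, −pr_1, …, −pr_N and Σ_{k=1}^N pr_k². Let (T_n) be a sequence of weakly nonlinear (sublinear and translatable) and monotone operators from E into E, let f ∈ E be bounded, and let x ∈ X be a point at which f is continuous and at which T_n(h)(x) → h(x) for each of the test functions h. Then T_n(f)(x) → f(x). -/

import Mathlib

open MeasureTheory Filter Topology Set

/-- **Remark `rem2`.** Let `X ⊆ ℝ^N` and `E` a vector sublattice of
functions on `X` containing the test functions `1, ±pr_1, …, ±pr_N, Σ pr_k²`.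
If `(T n)` is a sequence of weakly nonlinear and monotone operators from `E` into
`E`, `f ∈ E` is bounded, and `x ∈ X` is a point of continuity of `f` at which
`T n h x → h x` for every test function `h`, then `T n f x → f x`. -/
theorem korovkin_pointwise_at_continuity_point {N : ℕ} (X : Set (Fin N → ℝ))
    (E : Set (X → ℝ))
    -- `E` is a vector sublattice of `𝓕(X)`
    (hEadd : ∀ f ∈ E, ∀ g ∈ E, f + g ∈ E)
    (hEsmul : ∀ (c : ℝ), ∀ f ∈ E, c • f ∈ E)
    (hEsup : ∀ f ∈ E, ∀ g ∈ E, f ⊔ g ∈ E)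
    -- `E` contains the test functions
    (hone : (fun _ : X => (1 : ℝ)) ∈ E)
    (hpr : ∀ k : Fin N, (fun x : X => (x : Fin N → ℝ) k) ∈ E)
    (hprneg : ∀ k : Fin N, (fun x : X => -((x : Fin N → ℝ) k)) ∈ E)
    (hsq : (fun x : X => ∑ k, ((x : Fin N → ℝ) k) ^ 2) ∈ E)
    -- `(T n)` weakly nonlinear and monotone, from `E` into `E`
    (T : ℕ → (X → ℝ) → (X → ℝ))
    (hmap : ∀ n, ∀ f ∈ E, T n f ∈ E)
    (hsubadd : ∀ n, ∀ f ∈ E, ∀ g ∈ E, T n (f + g) ≤ T n f + T n g)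
    (hhom : ∀ n, ∀ (α : ℝ), 0 ≤ α → ∀ f ∈ E, T n (α • f) = α • T n f)
    (hmono : ∀ n, ∀ f ∈ E, ∀ g ∈ E, f ≤ g → T n f ≤ T n g)
    (htrans : ∀ n, ∀ f ∈ E, ∀ (α : ℝ), 0 ≤ α →
      T n (f + α • (fun _ : X => (1 : ℝ))) = T n f + α • T n (fun _ : X => (1 : ℝ)))
    -- the data: `f ∈ E` bounded and a point `x` of continuity of `f`
    (f : X → ℝ) (hfE : f ∈ E)
    (hfb : ∃ M : ℝ, ∀ y, |f y| ≤ M)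
    (x : X) (hfc : ContinuousAt f x)
    -- convergence at `x` on the test functions
    (htest1 : Tendsto (fun n => T n (fun _ => 1) x) atTop (𝓝 1))
    (htestpr : ∀ k : Fin N,
      Tendsto (fun n => T n (fun y : X => (y : Fin N → ℝ) k) x) atTop
        (𝓝 ((x : Fin N → ℝ) k)))
    (htestprneg : ∀ k : Fin N,
      Tendsto (fun n => T n (fun y : X => -((y : Fin N → ℝ) k)) x) atTop
        (𝓝 (-((x : Fin N → ℝ) k))))
    (htestsq : Tendsto (fun n => T n (fun y : X => ∑ k, ((y : Fin N → ℝ) k) ^ 2) x)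
      atTop (𝓝 (∑ k, ((x : Fin N → ℝ) k) ^ 2))) :
    Tendsto (fun n => T n f x) atTop (𝓝 (f x)) := by
  classical
  obtain ⟨M, hM⟩ := hfb
  have hM0 : (0:ℝ) ≤ M := le_trans (abs_nonneg _) (hM x)
  set xv : Fin N → ℝ := (x : Fin N → ℝ) with hxv
  set one : X → ℝ := fun _ : X => (1 : ℝ) with hone_def
  set cc : Fin N → ℝ := fun k => -2 * xv k with hcc
  set σ : ℝ := ∑ k, xv k ^ 2 with hσ
  set q : X → ℝ := fun y : X => ∑ k, ((y : Fin N → ℝ) k) ^ 2 with hq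
  set p : X → ℝ := fun y : X => ∑ k, ((y : Fin N → ℝ) k - xv k) ^ 2 with hp
  have hσ0 : 0 ≤ σ := Finset.sum_nonneg fun k _ => sq_nonneg _
  -- zero function
  have hzeroE : (0 : X → ℝ) ∈ E := by
    have h := hEsmul 0 one hone
    simpa using h
  have hT0 : ∀ n, T n (0 : X → ℝ) = 0 := by
    intro n
    have h := hhom n 0 le_rfl one hone
    simpa using h
  -- general translation (all real α)
  have htransAll : ∀ n, ∀ g ∈ E, ∀ α : ℝ,
      T n (g + α • one) = T n g + α • T n one := by
    intro n g hg α
    rcases le_or_gt 0 α with hα | hα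
    · exact htrans n g hg α hα
    · have hmem : g + α • one ∈ E := hEadd g hg _ (hEsmul α one hone)
      have h := htrans n (g + α • one) hmem (-α) (by linarith)
      have he : g + α • one + (-α) • one = g := by
        funext y
        simp [hone_def]
      rw [he] at h
      rw [h]; module
  -- scaled projections
  have hproj : ∀ c : ℝ, ∀ k : Fin N,
      (fun y : X => c * (y : Fin N → ℝ) k) ∈ E ∧
      Tendsto (fun n => T n (fun y : X => c * (y : Fin N → ℝ) k) x) atTop
        (𝓝 (c * xv k)) := by
    intro c k
    rcases le_or_gt 0 c with hc | hc
    · have he : (fun y : X => c * (y : Fin N → ℝ) k)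
          = c • (fun y : X => (y : Fin N → ℝ) k) := by
        funext y; simp
      constructor
      · rw [he]; exact hEsmul c _ (hpr k)
      · have hT : ∀ n, T n (fun y : X => c * (y : Fin N → ℝ) k) x
            = c * T n (fun y : X => (y : Fin N → ℝ) k) x := by
          intro n; rw [he, hhom n c hc _ (hpr k)]; simp
        simp only [hT]
        exact (htestpr k).const_mul c
    · have he : (fun y : X => c * (y : Fin N → ℝ) k)
          = (-c) • (fun y : X => -((y : Fin N → ℝ) k)) := by
        funext y; simp
      constructor
      · rw [he]; exact hEsmul (-c) _ (hprneg k)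
      · have hT : ∀ n, T n (fun y : X => c * (y : Fin N → ℝ) k) x
            = (-c) * T n (fun y : X => -((y : Fin N → ℝ) k)) x := by
          intro n; rw [he, hhom n (-c) (by linarith) _ (hprneg k)]; simp
        have h2 := (htestprneg k).const_mul (-c)
        have h3 : (-c) * -(xv k) = c * xv k := by ring
        rw [h3] at h2
        simp only [hT]
        exact h2
  -- sums of scaled projections
  have hsumE : ∀ A : Finset (Fin N),
      (fun y : X => ∑ k ∈ A, cc k * (y : Fin N → ℝ) k) ∈ E ∧
      ∀ n, T n (fun y : X => ∑ k ∈ A, cc k * (y : Fin N → ℝ) k) x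
        ≤ ∑ k ∈ A, T n (fun y : X => cc k * (y : Fin N → ℝ) k) x := by
    intro A
    induction A using Finset.induction_on with
    | empty =>
      have he : (fun y : X => ∑ k ∈ (∅ : Finset (Fin N)), cc k * (y : Fin N → ℝ) k)
          = (0 : X → ℝ) := by funext y; simp
      constructor
      · rw [he]; exact hzeroE
      · intro n; rw [he, hT0 n]; simp
    | @insert a A ha ih =>
      obtain ⟨ihE, ihle⟩ := ih
      have hsplit : (fun y : X => ∑ k ∈ insert a A, cc k * (y : Fin N → ℝ) k)
          = (fun y : X => cc a * (y : Fin N → ℝ) a)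
            + (fun y : X => ∑ k ∈ A, cc k * (y : Fin N → ℝ) k) := by
        funext y; simp [Finset.sum_insert ha]
      constructor
      · rw [hsplit]; exact hEadd _ (hproj (cc a) a).1 _ ihE
      · intro n
        rw [hsplit, Finset.sum_insert ha]
        have h1 := hsubadd n _ (hproj (cc a) a).1 _ ihE x
        refine le_trans h1 ?_
        simp only [Pi.add_apply]
        exact add_le_add le_rfl (ihle n)
  set s : X → ℝ := fun y : X => ∑ k, cc k * (y : Fin N → ℝ) k with hs
  have hsE : s ∈ E := (hsumE Finset.univ).1
  -- decomposition of p
  have hpeq : p = q + (s + σ • one) := by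
    funext y
    simp only [hp, hq, hs, hσ, hcc, hone_def, Pi.add_apply, Pi.smul_apply,
      smul_eq_mul, mul_one]
    rw [← Finset.sum_add_distrib, ← Finset.sum_add_distrib]
    exact Finset.sum_congr rfl (fun k _ => by ring)
  have hpE : p ∈ E := by
    rw [hpeq]
    exact hEadd q hsq _ (hEadd s hsE _ (hEsmul σ one hone))
  have hp0 : (0 : X → ℝ) ≤ p := by
    intro y
    exact Finset.sum_nonneg fun k _ => sq_nonneg _
  -- T n p x → 0
  have hTp_lb : ∀ n, 0 ≤ T n p x := by
    intro n
    have h := hmono n 0 hzeroE p hpE hp0 x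
    simpa [hT0 n] using h
  have hTp_ub : ∀ n, T n p x
      ≤ T n q x + ((∑ k, T n (fun y : X => cc k * (y : Fin N → ℝ) k) x)
          + σ * T n one x) := by
    intro n
    have hmem2 : s + σ • one ∈ E := hEadd s hsE _ (hEsmul σ one hone)
    have h1 := hsubadd n q hsq _ hmem2 x
    rw [hpeq]
    refine le_trans h1 ?_
    have h2 : T n (s + σ • one) = T n s + σ • T n one := htrans n s hsE σ hσ0
    simp only [Pi.add_apply, h2, Pi.smul_apply, smul_eq_mul]
    have h3 : T n s x ≤ ∑ k, T n (fun y : X => cc k * (y : Fin N → ℝ) k) x := by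
      rw [hs]; exact (hsumE Finset.univ).2 n
    linarith
  have hUB : Tendsto (fun n => T n q x
      + ((∑ k, T n (fun y : X => cc k * (y : Fin N → ℝ) k) x) + σ * T n one x))
      atTop (𝓝 0) := by
    have h1 : Tendsto (fun n => T n q x) atTop (𝓝 σ) := htestsq
    have h2 : Tendsto (fun n => ∑ k, T n (fun y : X => cc k * (y : Fin N → ℝ) k) x)
        atTop (𝓝 (∑ k, cc k * xv k)) :=
      tendsto_finset_sum _ (fun k _ => (hproj (cc k) k).2)
    have h3 : Tendsto (fun n => σ * T n one x) atTop (𝓝 (σ * 1)) :=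
      htest1.const_mul σ
    have h4 := h1.add (h2.add h3)
    have h5 : σ + ((∑ k, cc k * xv k) + σ * 1) = 0 := by
      have h6 : (∑ k, cc k * xv k) = -2 * σ := by
        rw [hσ, Finset.mul_sum]
        exact Finset.sum_congr rfl (fun k _ => by rw [hcc]; ring)
      rw [h6]; ring
    rwa [h5] at h4
  have hTp : Tendsto (fun n => T n p x) atTop (𝓝 0) :=
    squeeze_zero hTp_lb hTp_ub hUB
  -- main argument
  rw [Metric.tendsto_nhds]
  intro ε hε
  have hε4 : 0 < ε / 4 := by linarith
  obtain ⟨δ, hδ, hδf⟩ := Metric.continuousAt_iff.1 hfc (ε / 4) hε4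
  set C : ℝ := 2 * M / δ ^ 2 with hC
  have hδ2 : 0 < δ ^ 2 := by positivity
  have hC0 : 0 ≤ C := by positivity
  have hCδ : C * δ ^ 2 = 2 * M := by
    rw [hC]; field_simp
  have key : ∀ y : X, |f y - f x| ≤ ε / 4 + C * p y := by
    intro y
    have hpy0 : 0 ≤ p y := Finset.sum_nonneg fun k _ => sq_nonneg _
    rcases lt_or_ge (p y) (δ ^ 2) with hcase | hcase
    · have hdist : dist y x < δ := by
        rw [Subtype.dist_eq, dist_pi_lt_iff hδ]
        intro k
        have h1 : ((y : Fin N → ℝ) k - xv k) ^ 2 ≤ p y :=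
          Finset.single_le_sum
            (f := fun k => ((y : Fin N → ℝ) k - xv k) ^ 2)
            (fun i _ => sq_nonneg _) (Finset.mem_univ k)
        have h2 : ((y : Fin N → ℝ) k - xv k) ^ 2 < δ ^ 2 := lt_of_le_of_lt h1 hcase
        have h3 : |(y : Fin N → ℝ) k - xv k| < δ :=
          lt_of_pow_lt_pow_left₀ 2 hδ.le (by rwa [sq_abs])
        rw [Real.dist_eq]
        exact h3
      have hf1 := hδf hdist
      rw [Real.dist_eq] at hf1
      nlinarith [mul_nonneg hC0 hpy0]
    · have habs : |f y - f x| ≤ |f y| + |f x| := abs_sub (f y) (f x)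
      have h2M : 2 * M ≤ C * p y := by
        rw [← hCδ]
        exact mul_le_mul_of_nonneg_left hcase hC0
      have := hM y
      have := hM x
      linarith
  have hCpE : C • p ∈ E := hEsmul C p hpE
  have hnCpE : (-C) • p ∈ E := hEsmul (-C) p hpE
  have hupE : C • p + (f x + ε / 4) • one ∈ E :=
    hEadd _ hCpE _ (hEsmul _ one hone)
  have hloE : (-C) • p + (f x - ε / 4) • one ∈ E :=
    hEadd _ hnCpE _ (hEsmul _ one hone)
  have hup : f ≤ C • p + (f x + ε / 4) • one := by
    intro y
    have h := (abs_le.1 (key y)).2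
    simp only [Pi.add_apply, Pi.smul_apply, smul_eq_mul, hone_def, mul_one]
    linarith
  have hlo : (-C) • p + (f x - ε / 4) • one ≤ f := by
    intro y
    have h := (abs_le.1 (key y)).1
    simp only [Pi.add_apply, Pi.smul_apply, smul_eq_mul, hone_def, mul_one]
    linarith
  have hA : ∀ n, T n f x ≤ C * T n p x + (f x + ε / 4) * T n one x := by
    intro n
    have h1 := hmono n f hfE _ hupE hup x
    have h2 : T n (C • p + (f x + ε / 4) • one)
        = T n (C • p) + (f x + ε / 4) • T n one :=
      htransAll n (C • p) hCpE (f x + ε / 4)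
    have h3 : T n (C • p) = C • T n p := hhom n C hC0 p hpE
    rw [h2, h3] at h1
    simpa using h1
  have hB : ∀ n, (f x - ε / 4) * T n one x - C * T n p x ≤ T n f x := by
    intro n
    have h1 := hmono n _ hloE f hfE hlo x
    have h2 : T n ((-C) • p + (f x - ε / 4) • one)
        = T n ((-C) • p) + (f x - ε / 4) • T n one :=
      htransAll n _ hnCpE _
    have h3 : -(C * T n p x) ≤ T n ((-C) • p) x := by
      have h4 := hsubadd n _ hnCpE _ hCpE x
      have h5 : (-C) • p + C • p = 0 := by
        rw [← add_smul]; simp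
      rw [h5, hT0 n] at h4
      have h6 : T n (C • p) = C • T n p := hhom n C hC0 p hpE
      rw [h6] at h4
      simp only [Pi.zero_apply, Pi.add_apply, Pi.smul_apply, smul_eq_mul] at h4
      linarith
    rw [h2] at h1
    simp only [Pi.add_apply, Pi.smul_apply, smul_eq_mul] at h1
    linarith
  have hAten : Tendsto (fun n => C * T n p x + (f x + ε / 4) * T n one x)
      atTop (𝓝 (f x + ε / 4)) := by
    have h := (hTp.const_mul C).add (htest1.const_mul (f x + ε / 4))
    simpa using h
  have hBten : Tendsto (fun n => (f x - ε / 4) * T n one x - C * T n p x)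
      atTop (𝓝 (f x - ε / 4)) := by
    have h := (htest1.const_mul (f x - ε / 4)).sub (hTp.const_mul C)
    simpa using h
  have hevA : ∀ᶠ n in atTop,
      C * T n p x + (f x + ε / 4) * T n one x < f x + ε / 2 :=
    hAten.eventually_lt_const (by linarith)
  have hevB : ∀ᶠ n in atTop,
      f x - ε / 2 < (f x - ε / 4) * T n one x - C * T n p x :=
    hBten.eventually_const_lt (by linarith)
  filter_upwards [hevA, hevB] with n hA' hB'
  have h1 := hA n
  have h2 := hB n
  rw [Real.dist_eq, abs_lt]
  constructor <;> linarith
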